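/- Let Θ ∈ GL(2,ℤ) be hyperbolic, i.e. det Θ = ±1 and no eigenvalue of Θ is a root of unity (equivalently: if det Θ = 1 then |tr Θ| > 2, and if det Θ = −1 then tr Θ ≠ 0). Then every abelian normal subgroup of π_Θ = ℤ² ⋊_Θ ℤ is contained in the subgroup A = ℤ² × {0}; consequently A is the unique maximal abelian normal subgroup of π_Θ. -/

import Mathlib

/-- The additive automorphism of `ℤ²` given by a matrix `Θ ∈ GL(2,ℤ)`. -/
def thetaAddAut (Θ : GL (Fin 2) ℤ) : (Fin 2 → ℤ) ≃+ (Fin 2 → ℤ) where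
  toFun v := (Θ : Matrix (Fin 2) (Fin 2) ℤ).mulVec v
  invFun v := (Θ⁻¹ : GL (Fin 2) ℤ).1.mulVec v
  left_inv v := by
    simp only [Matrix.mulVec_mulVec, Units.inv_mul, Matrix.one_mulVec]
  right_inv v := by
    simp only [Matrix.mulVec_mulVec, Units.mul_inv, Matrix.one_mulVec]
  map_add' v w := by simpa using Matrix.mulVec_add (Θ : Matrix (Fin 2) (Fin 2) ℤ) v w

/-- `π_Θ = ℤ² ⋊_Θ ℤ`, the semidirect product in which the generator of `ℤ`
acts on `ℤ²` by the matrix `Θ`. -/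
abbrev piTheta (Θ : GL (Fin 2) ℤ) : Type :=
  SemidirectProduct (Multiplicative (Fin 2 → ℤ)) (Multiplicative ℤ)
    (zpowersHom (MulAut (Multiplicative (Fin 2 → ℤ)))
      (AddEquiv.toMultiplicative (thetaAddAut Θ)))


/-- The subgroup `A = ℤ² × {0}` of `π_Θ`. -/
def zSqSubgroup (Θ : GL (Fin 2) ℤ) : Subgroup (piTheta Θ) :=
  (SemidirectProduct.inl : Multiplicative (Fin 2 → ℤ) →* piTheta Θ).range


namespace Stmt15Aux
open Matrix

lemma det_sub_one (A : Matrix (Fin 2) (Fin 2) ℤ) :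
    (A - 1).det = A.det - A.trace + 1 := by
  simp only [Matrix.det_fin_two, Matrix.trace_fin_two, Matrix.sub_apply, Matrix.one_apply]
  norm_num; ring

lemma sq_eq (A : Matrix (Fin 2) (Fin 2) ℤ) :
    A * A = A.trace • A - A.det • (1 : Matrix (Fin 2) (Fin 2) ℤ) := by
  ext i j
  fin_cases i <;> fin_cases j <;>
    · simp only [Matrix.sub_apply, Matrix.smul_apply, smul_eq_mul, Matrix.mul_apply,
        Fin.sum_univ_two, Matrix.one_apply, Matrix.trace_fin_two, Matrix.det_fin_two]
      norm_num <;> ring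

lemma trace_pow_rec (A : Matrix (Fin 2) (Fin 2) ℤ) (k : ℕ) :
    (A ^ (k+2)).trace = A.trace * (A ^ (k+1)).trace - A.det * (A ^ k).trace := by
  have h : A ^ (k+2) = A.trace • A ^ (k+1) - A.det • A ^ k := by
    have h2 : A ^ (k+2) = A ^ k * (A * A) := by
      rw [pow_succ, pow_succ, mul_assoc]
    rw [h2, sq_eq, mul_sub, mul_smul_comm, mul_smul_comm, mul_one, ← pow_succ]
  rw [h, Matrix.trace_sub, Matrix.trace_smul, Matrix.trace_smul, smul_eq_mul, smul_eq_mul]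

lemma seqA (t : ℤ) (ht : 2 < |t|) (a : ℕ → ℤ) (h0 : a 0 = 2) (h1 : a 1 = t)
    (hr : ∀ k, a (k+2) = t * a (k+1) - a k) :
    ∀ n, 3 ≤ |a (n+1)| ∧ |a (n+1)| < |a (n+2)| := by
  have habs : ∀ x y : ℤ, |t| * |y| - |x| ≤ |t * y - x| := by
    intro x y
    calc |t| * |y| - |x| = |t * y| - |x| := by rw [abs_mul]
    _ ≤ |t * y - x| := abs_sub_abs_le_abs_sub _ _
  intro n
  induction n with
  | zero =>
    simp only [Nat.reduceAdd, Nat.zero_add]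
    have h2 := habs (a 0) (a 1)
    rw [← hr 0] at h2
    simp only [Nat.reduceAdd, Nat.zero_add] at h2
    rw [h0, h1] at h2
    have ht1 : |a 1| = |t| := by rw [h1]
    have h3 : |(2:ℤ)| = 2 := by norm_num
    rw [h3] at h2
    constructor
    · rw [ht1]; linarith
    · rw [ht1]; nlinarith
  | succ n ih =>
    simp only [Nat.add_assoc, Nat.reduceAdd] at *
    obtain ⟨ih1, ih2⟩ := ih
    have key := habs (a (n+1)) (a (n+2))
    rw [← hr (n+1)] at key
    simp only [Nat.add_assoc, Nat.reduceAdd] at key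
    constructor
    · linarith
    · nlinarith

lemma seqB (t : ℤ) (ht : 1 ≤ t) (a : ℕ → ℤ) (h0 : a 0 = 2) (h1 : a 1 = t)
    (hr : ∀ k, a (k+2) = t * a (k+1) + a k) :
    (∀ n, 1 ≤ a (n+1)) ∧ (∀ n, 3 ≤ a (n+2)) := by
  have pos : ∀ n, 1 ≤ a n ∧ 1 ≤ a (n+1) := by
    intro n
    induction n with
    | zero => simp only [Nat.zero_add]; exact ⟨by omega, by omega⟩
    | succ n ih =>
      simp only [Nat.add_assoc, Nat.reduceAdd] at *
      refine ⟨ih.2, ?_⟩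
      have h2 := hr n
      nlinarith [ih.1, ih.2]
  have three : ∀ n, 3 ≤ a (n+2) := by
    intro n
    induction n with
    | zero =>
      simp only [Nat.zero_add]
      have h2 := hr 0
      simp only [Nat.reduceAdd, Nat.zero_add] at h2
      rw [h0, h1] at h2
      nlinarith
    | succ n ih =>
      simp only [Nat.add_assoc, Nat.reduceAdd] at *
      have h2 := hr (n+1)
      simp only [Nat.add_assoc, Nat.reduceAdd] at h2
      nlinarith [(pos (n+1)).1]
  exact ⟨fun n => (pos n).2, three⟩

lemma keyNat (M : Matrix (Fin 2) (Fin 2) ℤ)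
    (h : (M.det = 1 ∧ 2 < |M.trace|) ∨ (M.det = -1 ∧ M.trace ≠ 0))
    (n : ℕ) (hn : n ≠ 0) : (M ^ n - 1).det ≠ 0 := by
  set a : ℕ → ℤ := fun k => (M ^ k).trace with ha
  have h0 : a 0 = 2 := by simp [ha]
  have h1 : a 1 = M.trace := by simp [ha]
  have hds : (M ^ n - 1).det = M.det ^ n - a n + 1 := by
    rw [det_sub_one, Matrix.det_pow]
  rw [hds]
  obtain ⟨m, rfl⟩ : ∃ m, n = m + 1 := ⟨n - 1, by omega⟩
  rcases h with ⟨hd, ht⟩ | ⟨hd, ht⟩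
  · -- det = 1
    have hr : ∀ k, a (k+2) = M.trace * a (k+1) - a k := by
      intro k
      have := trace_pow_rec M k
      rw [hd] at this
      simpa [ha] using this
    have h3 := (seqA M.trace ht a h0 h1 hr m).1
    rw [hd, one_pow]
    rcases abs_cases (a (m+1)) with ⟨he, _⟩ | ⟨he, _⟩ <;> omega
  · -- det = -1
    have hr : ∀ k, a (k+2) = M.trace * a (k+1) + a k := by
      intro k
      have := trace_pow_rec M k
      rw [hd] at this
      simpa [ha, sub_neg_eq_add] using this
    rw [hd]
    rcases lt_or_gt_of_ne ht with htneg | htpos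
    · -- t ≤ -1 : use b k = (-1)^k * a k
      set b : ℕ → ℤ := fun k => (-1)^k * a k with hb
      have hb0 : b 0 = 2 := by simp [hb, h0]
      have hb1 : b 1 = -M.trace := by simp [hb, h1]
      have hbr : ∀ k, b (k+2) = (-M.trace) * b (k+1) + b k := by
        intro k
        simp only [hb, hr k]
        ring
      have hB := seqB (-M.trace) (by omega) b hb0 hb1 hbr
      have hval : a (m+1) = (-1)^(m+1) * b (m+1) := by
        simp only [hb]
        rw [← mul_assoc, ← pow_add]
        simp [pow_add, neg_one_sq, ← two_mul, pow_mul]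
      rcases Nat.even_or_odd (m+1) with he | ho
      · have e1 : ((-1:ℤ))^(m+1) = 1 := he.neg_one_pow
        rw [hval, e1, one_mul]
        obtain ⟨j, hj⟩ : ∃ j, m + 1 = j + 2 := by
          rcases he with ⟨c, hc⟩; exact ⟨m - 1, by omega⟩
        have := (hB.2 j)
        rw [← hj] at this
        omega
      · have e1 : ((-1:ℤ))^(m+1) = -1 := ho.neg_one_pow
        rw [hval, e1]
        have := hB.1 m
        omega
    · -- t ≥ 1
      have hB := seqB M.trace (by omega) a h0 h1 hr
      rcases Nat.even_or_odd (m+1) with he | ho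
      · have e1 : ((-1:ℤ))^(m+1) = 1 := he.neg_one_pow
        rw [e1]
        obtain ⟨j, hj⟩ : ∃ j, m + 1 = j + 2 := by
          rcases he with ⟨c, hc⟩; exact ⟨m - 1, by omega⟩
        have := hB.2 j
        rw [← hj] at this
        omega
      · have e1 : ((-1:ℤ))^(m+1) = -1 := ho.neg_one_pow
        rw [e1]
        have := hB.1 m
        omega

lemma keyZ (Θ : GL (Fin 2) ℤ)
    (h : ((Θ : Matrix (Fin 2) (Fin 2) ℤ).det = 1 ∧ 2 < |(Θ : Matrix (Fin 2) (Fin 2) ℤ).trace|) ∨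
      ((Θ : Matrix (Fin 2) (Fin 2) ℤ).det = -1 ∧ (Θ : Matrix (Fin 2) (Fin 2) ℤ).trace ≠ 0))
    (n : ℤ) (hn : n ≠ 0) :
    (((Θ ^ n : GL (Fin 2) ℤ) : Matrix (Fin 2) (Fin 2) ℤ) - 1).det ≠ 0 := by
  have hpos : ∀ m : ℕ, m ≠ 0 →
      (((Θ ^ (m:ℤ) : GL (Fin 2) ℤ) : Matrix (Fin 2) (Fin 2) ℤ) - 1).det ≠ 0 := by
    intro m hm
    have : ((Θ ^ (m:ℤ) : GL (Fin 2) ℤ) : Matrix (Fin 2) (Fin 2) ℤ)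
        = (Θ : Matrix (Fin 2) (Fin 2) ℤ) ^ m := by
      rw [zpow_natCast]
      exact Units.val_pow_eq_pow_val _ _
    rw [this]
    exact keyNat _ h m hm
  rcases lt_or_gt_of_ne hn with hneg | hgt
  · -- n < 0
    set m : ℕ := (-n).toNat with hm
    have hmn : (m : ℤ) = -n := Int.toNat_of_nonneg (by omega)
    have hfac : ((Θ ^ n : GL (Fin 2) ℤ) : Matrix (Fin 2) (Fin 2) ℤ) - 1
        = ((Θ ^ n : GL (Fin 2) ℤ) : Matrix (Fin 2) (Fin 2) ℤ) *
          (1 - ((Θ ^ (m:ℤ) : GL (Fin 2) ℤ) : Matrix (Fin 2) (Fin 2) ℤ)) := by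
      rw [mul_sub, mul_one, ← Units.val_mul, ← _root_.zpow_add]
      have : n + (m:ℤ) = 0 := by omega
      rw [this, zpow_zero, Units.val_one]
    have hdetu : ((Θ ^ n : GL (Fin 2) ℤ) : Matrix (Fin 2) (Fin 2) ℤ).det ≠ 0 := by
      have : IsUnit ((Θ ^ n : GL (Fin 2) ℤ) : Matrix (Fin 2) (Fin 2) ℤ).det :=
        (Θ ^ n).isUnit.map Matrix.detMonoidHom
      exact this.ne_zero
    have h2 : (1 - ((Θ ^ (m:ℤ) : GL (Fin 2) ℤ) : Matrix (Fin 2) (Fin 2) ℤ)).det ≠ 0 := by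
      have hneg1 : (1 - ((Θ ^ (m:ℤ) : GL (Fin 2) ℤ) : Matrix (Fin 2) (Fin 2) ℤ))
          = -(((Θ ^ (m:ℤ) : GL (Fin 2) ℤ) : Matrix (Fin 2) (Fin 2) ℤ) - 1) := (neg_sub _ _).symm
      rw [hneg1, Matrix.det_neg]
      simp only [Fintype.card_fin]
      have := hpos m (by omega)
      simpa using this
    rw [hfac, Matrix.det_mul]
    exact mul_ne_zero hdetu h2
  · have : n = ((n.toNat : ℕ) : ℤ) := by omega
    rw [this]
    exact hpos n.toNat (by omega)


/-- `thetaAddAut` as a monoid hom into the multiplicative automorphisms. -/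
def thetaHom : GL (Fin 2) ℤ →* MulAut (Multiplicative (Fin 2 → ℤ)) where
  toFun A := AddEquiv.toMultiplicative (thetaAddAut A)
  map_one' := by
    ext z : 1
    show Multiplicative.ofAdd (((1 : GL (Fin 2) ℤ) : Matrix (Fin 2) (Fin 2) ℤ).mulVec
      (Multiplicative.toAdd z)) = z
    simp
  map_mul' A B := by
    ext z : 1
    show Multiplicative.ofAdd (((A * B : GL (Fin 2) ℤ) : Matrix (Fin 2) (Fin 2) ℤ).mulVec
      (Multiplicative.toAdd z)) =
      Multiplicative.ofAdd ((A : Matrix (Fin 2) (Fin 2) ℤ).mulVec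
        ((B : Matrix (Fin 2) (Fin 2) ℤ).mulVec (Multiplicative.toAdd z)))
    rw [Matrix.mulVec_mulVec, Units.val_mul]

lemma phi_apply (Θ : GL (Fin 2) ℤ) (r : Multiplicative ℤ) (z : Multiplicative (Fin 2 → ℤ)) :
    Multiplicative.toAdd ((zpowersHom (MulAut (Multiplicative (Fin 2 → ℤ)))
      (AddEquiv.toMultiplicative (thetaAddAut Θ)) r) z)
    = ((Θ ^ (Multiplicative.toAdd r) : GL (Fin 2) ℤ) : Matrix (Fin 2) (Fin 2) ℤ).mulVec
      (Multiplicative.toAdd z) := by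
  have h1 : AddEquiv.toMultiplicative (thetaAddAut Θ) = thetaHom Θ := rfl
  rw [zpowersHom_apply, h1, ← map_zpow]
  rfl

end Stmt15Aux


open Stmt15Aux in
/-- if `Θ ∈ GL(2,ℤ)` is hyperbolic (no eigenvalue a root of unity;
equivalently `det Θ = 1` and `|tr Θ| > 2`, or `det Θ = −1` and `tr Θ ≠ 0`), then
every abelian normal subgroup of `π_Θ = ℤ² ⋊_Θ ℤ` is contained in `A = ℤ² × {0}`;
consequently `A` (which is abelian and normal) is the unique maximal abelian
normal subgroup of `π_Θ`. -/
theorem stmt15 (Θ : GL (Fin 2) ℤ)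
    (hhyp : ((Θ : Matrix (Fin 2) (Fin 2) ℤ).det = 1 ∧
        2 < |(Θ : Matrix (Fin 2) (Fin 2) ℤ).trace|) ∨
      ((Θ : Matrix (Fin 2) (Fin 2) ℤ).det = -1 ∧
        (Θ : Matrix (Fin 2) (Fin 2) ℤ).trace ≠ 0)) :
    (∀ N : Subgroup (piTheta Θ), N.Normal → (∀ x ∈ N, ∀ y ∈ N, x * y = y * x) →
      N ≤ zSqSubgroup Θ) ∧
    (zSqSubgroup Θ).Normal ∧
    (∀ x ∈ zSqSubgroup Θ, ∀ y ∈ zSqSubgroup Θ, x * y = y * x) := by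
  have habel : ∀ x ∈ zSqSubgroup Θ, ∀ y ∈ zSqSubgroup Θ, x * y = y * x := by
    rintro x ⟨a, rfl⟩ y ⟨b, rfl⟩
    rw [← map_mul, ← map_mul, mul_comm]
  have hnormal : (zSqSubgroup Θ).Normal := by
    rw [zSqSubgroup, SemidirectProduct.range_inl_eq_ker_rightHom]
    exact MonoidHom.normal_ker _
  refine ⟨?_, hnormal, habel⟩
  intro N hN hcomm x hx
  rw [zSqSubgroup, SemidirectProduct.range_inl_eq_ker_rightHom, MonoidHom.mem_ker,
    SemidirectProduct.rightHom_eq_right]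
  by_contra hx1
  set n : ℤ := Multiplicative.toAdd x.right with hn
  have hn0 : n ≠ 0 := by
    intro h
    exact hx1 (toAdd_eq_zero.mp (hn ▸ h))
  set P : Matrix (Fin 2) (Fin 2) ℤ := ((Θ ^ n : GL (Fin 2) ℤ) : Matrix (Fin 2) (Fin 2) ℤ)
    with hP
  have hw : ∀ w : Fin 2 → ℤ, ((P - 1) * (P - 1)).mulVec w = 0 := by
    intro w
    set ω : Multiplicative (Fin 2 → ℤ) := Multiplicative.ofAdd w with hω
    have hy : SemidirectProduct.inl ω * x * (SemidirectProduct.inl ω)⁻¹ ∈ N :=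
      hN.conj_mem x hx _
    have hcom := hcomm x hx _ hy
    have hleft := congrArg SemidirectProduct.left hcom
    rw [← map_inv] at hleft
    simp only [SemidirectProduct.mul_left, SemidirectProduct.mul_right,
      SemidirectProduct.left_inl, SemidirectProduct.right_inl, map_one, MulAut.one_apply,
      one_mul, mul_one] at hleft
    have hE := congrArg Multiplicative.toAdd hleft
    simp only [toAdd_mul, toAdd_inv, phi_apply,
      toAdd_ofAdd, Matrix.mulVec_add, Matrix.mulVec_neg] at hE
    rw [← hn, ← hP] at hE
    rw [← Matrix.mulVec_mulVec]
    simp only [Matrix.sub_mulVec, Matrix.one_mulVec, Matrix.mulVec_sub, Matrix.mulVec_neg]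
    simp only [hω, toAdd_ofAdd] at hE
    linear_combination -hE
  have hsq : (P - 1) * (P - 1) = 0 := by
    ext i j
    have h1 := congrFun (hw (Pi.single j 1)) i
    rw [Matrix.mulVec_single] at h1
    simpa using h1
  have hdet := keyZ Θ hhyp n hn0
  rw [← hP] at hdet
  apply hdet
  have h2 : (P - 1).det * (P - 1).det = 0 := by
    rw [← Matrix.det_mul, hsq, Matrix.det_zero]
  exact mul_self_eq_zero.mp h2
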